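/- Let u ∈ {0,1}^r be a 0-1 vector and let ξ^u = ξ_1^{u_1}·ξ_2^{u_2}⋯ξ_r^{u_r} be the corresponding monomial in Jucys–Murphy elements. Then the product √(ξ^u) := (1)^{u_1}·(T_1)^{u_2}·(T_2T_1)^{u_3}⋯(T_{r−1}⋯T_1)^{u_r} is reduced, so that √(ξ^u) = T_{σ(u)} for a unique permutation σ(u), and ξ^u = T_{σ(u)} · T_{σ(u)⁻¹}. More generally, for a composition I of n and a sequence uu of 0-1 vectors compatible with I, the direct product ξ^{uu} of such monomials in H(S_I) satisfies ξ^{uu} = T_{σ(uu)} · T_{σ(uu)⁻¹} for the corresponding permutation σ(uu) ∈ S_I. -/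

import Mathlib

open scoped BigOperators
open Finset

namespace HeckePaper

noncomputable section

/-- The Coxeter length of a permutation of `Fin n`, i.e. its number of inversions. -/
def len {n : ℕ} (w : Equiv.Perm (Fin n)) : ℕ :=
  (Finset.univ.filter fun p : Fin n × Fin n => p.1 < p.2 ∧ w p.2 < w p.1).card

/-- The adjacent transposition exchanging `i` and `i+1` (`0`-based), i.e. the
Coxeter generator `s_{i+1} = T_{i+1}` in the (1-based) notation of the paper;
defined to be `1` when out of range. -/
def adj (n i : ℕ) : Equiv.Perm (Fin n) :=
  if h : i + 1 < n then Equiv.swap ⟨i, by omega⟩ ⟨i + 1, h⟩ else 1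

/-- The q-integer `[k] = (q^k - q^{-k})/(q - q⁻¹) = q^{k-1} + q^{k-3} + ⋯ + q^{1-k}`. -/
def qint {R : Type} [CommRing R] (q : Rˣ) (k : ℤ) : R :=
  if 0 ≤ k then ∑ j ∈ Finset.range k.toNat, ((q ^ (k - 1 - 2 * (j : ℤ)) : Rˣ) : R)
  else - ∑ j ∈ Finset.range (-k).toNat, ((q ^ (-k - 1 - 2 * (j : ℤ)) : Rˣ) : R)

/-- `Q = q - q⁻¹`. -/
def Qv (R : Type) [CommRing R] (q : Rˣ) : R := (q : R) - ((q⁻¹ : Rˣ) : R)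

/-- A realization of the Hecke algebra `H_n` of the symmetric group `S_n` over `R`:
an `R`-algebra `H` with a basis `{T_w : w ∈ S_n}` such that `T_u T_v = T_{uv}`
whenever lengths add, and the Hecke quadratic relations
`T_i² = (q - q⁻¹) T_i + 1` hold for the generators. -/
structure HeckeAlgebra (n : ℕ) (R : Type) [CommRing R] (q : Rˣ) (H : Type)
    [Ring H] [Algebra R H] where
  T : Equiv.Perm (Fin n) → H
  basis : Module.Basis (Equiv.Perm (Fin n)) R H
  basis_eq : ∀ w, basis w = T w
  T_one : T 1 = 1
  T_mul : ∀ u v : Equiv.Perm (Fin n), len (u * v) = len u + len v →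
    T u * T v = T (u * v)
  T_sq : ∀ i : ℕ, i + 1 < n →
    T (adj n i) * T (adj n i) = Qv R q • T (adj n i) + 1

/-- The Young subgroup `S_I` of `S_n` associated with a composition `I` of `n`:
permutations preserving each block of the composition. -/
def youngSubgroup {n : ℕ} (c : Composition n) : Subgroup (Equiv.Perm (Fin n)) where
  carrier := {w | ∀ i, c.index (w i) = c.index i}
  one_mem' := fun _ => rfl
  mul_mem' := by
    intro a b ha hb i
    have hb' := hb i
    have ha' := ha (b i)
    simpa [Equiv.Perm.mul_apply, hb'] using ha'
  inv_mem' := by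
    intro a ha i
    have := ha (a⁻¹ i)
    simpa using this.symm

/-- `w` is the minimal-length representative of its coset `w·S_I`. -/
def IsMinCosetRep {n : ℕ} (c : Composition n) (w : Equiv.Perm (Fin n)) : Prop :=
  ∀ u ∈ youngSubgroup c, len w ≤ len (w * u)

/-- `w` is of maximal length in its coset `w·S_I`. -/
def IsMaxCosetRep {n : ℕ} (c : Composition n) (w : Equiv.Perm (Fin n)) : Prop :=
  ∀ u ∈ youngSubgroup c, len (w * u) ≤ len w

/-- The set of minimal-length representatives of the cosets `S_n/S_I`. -/
def minCosetReps {n : ℕ} (c : Composition n) : Finset (Equiv.Perm (Fin n)) :=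
  @Finset.filter _ (IsMinCosetRep c) (Classical.decPred _) Finset.univ

/-- The word `[a+m-2, …, a+1, a]` (so that the corresponding product of adjacent
transpositions is the block cyclic permutation `ζ_m` shifted by `a`). -/
def zetaWordBlock (a m : ℕ) : List ℕ := (List.range (m - 1)).reverse.map (a + ·)

/-- The reduced word of the permutation `w_J` (whose Hecke element is `ζ_J`),
for a composition `J` of `n`. -/
def zetaWord {n : ℕ} (c : Composition n) : List ℕ :=
  (List.ofFn fun k : Fin c.length =>
    zetaWordBlock (c.sizeUpTo k) (c.blocksFun k)).flatten

/-- The permutation `w_J`, a minimal-length representative of the conjugacy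
class corresponding to the composition `J`; `ζ_J = T_{w_J}`. -/
def zetaPerm {n : ℕ} (c : Composition n) : Equiv.Perm (Fin n) :=
  ((zetaWord c).map (adj n)).prod

/-- The composition of `n` obtained by sorting the parts of a partition of `n`
in decreasing order. -/
def partComp {n : ℕ} (μ : n.Partition) : Composition n where
  blocks := μ.parts.sort (· ≥ ·)
  blocks_pos := by
    intro i hi
    exact μ.parts_pos (by rwa [Multiset.mem_sort] at hi)
  blocks_sum := by
    have h : ((μ.parts.sort (· ≥ ·) : List ℕ) : Multiset ℕ) = μ.parts :=
      Multiset.sort_eq _ _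
    calc (μ.parts.sort (· ≥ ·)).sum
        = ((μ.parts.sort (· ≥ ·) : List ℕ) : Multiset ℕ).sum := by
          rw [Multiset.sum_coe]
      _ = μ.parts.sum := by rw [h]
      _ = n := μ.parts_sum

/-- `m` is a partial sum `j_1 + ⋯ + j_k` of the composition `J`. -/
def IsPartialSum {n : ℕ} (c : Composition n) (m : ℕ) : Prop :=
  ∃ k ≤ c.length, c.sizeUpTo k = m

/-- `w` has a recoil at `a` (0-based; i.e. at `i = a+1` in the 1-based notation of
the paper): the value `a+1` occurs to the left of the value `a` in the one-line
word of `w`. -/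
def Recoil {n : ℕ} (w : Equiv.Perm (Fin n)) (a : ℕ) : Prop :=
  ∀ h : a + 1 < n, w⁻¹ ⟨a + 1, h⟩ < w⁻¹ ⟨a, by omega⟩

namespace HeckeAlgebra

variable {n : ℕ} {R : Type} [CommRing R] {q : Rˣ} {H : Type} [Ring H] [Algebra R H]
variable (𝒜 : HeckeAlgebra n R q H)

/-- The scalar product on `H_n` for which the basis `{T_w}` is orthonormal. -/
def scalar (x y : H) : R :=
  ∑ w : Equiv.Perm (Fin n), 𝒜.basis.repr x w * 𝒜.basis.repr y w

/-- The normalization map `N_I : H(S_I) → H_n`,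
`h ↦ Σ_w T_w h T_{w⁻¹}` (sum over the minimal-length coset representatives of
`S_n/S_I`). -/
def norm (c : Composition n) (h : H) : H :=
  ∑ w ∈ minCosetReps c, 𝒜.T w * h * 𝒜.T w⁻¹

/-- The product `T_{a_1} T_{a_2} ⋯` in the Hecke algebra associated with a word
(list of 0-based indices of the generators). -/
def wordT (l : List ℕ) : H := (l.map fun a => 𝒜.T (adj n a)).prod

/-- The Hecke element `ζ_J = T_{w_J}` of a composition `J`. -/
def zeta (c : Composition n) : H := 𝒜.T (zetaPerm c)

end HeckeAlgebra


/-- The permutation with reduced word `s_{a+j-1} ⋯ s_{a+1}` (1-based), i.e. the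
permutation underlying the shifted Jucys–Murphy "square root"
`T_{a+j-2} ⋯ T_a` (0-based indices). -/
def jmPerm (n a j : ℕ) : Equiv.Perm (Fin n) :=
  ((zetaWordBlock a j).map (adj n)).prod

/-- The permutation `σ(u)` associated to a 0-1 vector `u` (indexed `1,…,r`):
the product `(1)^{u_1}·(s_1)^{u_2}·(s_2s_1)^{u_3}⋯`. -/
def sigmaOf (n r : ℕ) (u : ℕ → ℕ) : Equiv.Perm (Fin n) :=
  ((List.range r).map fun i => jmPerm n 0 (i + 1) ^ u (i + 1)).prod

/-- The permutation `σ(uu)` associated to a sequence of 0-1 vectors compatible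
with the composition `c` (the sequence being recorded as a single function `uu`
on 0-based positions). -/
def sigmaUU {n : ℕ} (c : Composition n) (uu : ℕ → ℕ) : Equiv.Perm (Fin n) :=
  (List.ofFn fun k : Fin c.length =>
    ((List.range (c.blocksFun k)).map fun j =>
      jmPerm n (c.sizeUpTo k) (j + 1) ^ uu (c.sizeUpTo k + j)).prod).prod

namespace HeckeAlgebra

variable {n : ℕ} {R : Type} [CommRing R] {q : Rˣ} {H : Type} [Ring H] [Algebra R H]
variable (𝒜 : HeckeAlgebra n R q H)

/-- The shifted Jucys–Murphy element `ξ_j` of the block starting at `a`: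
`T_{a+j-2} ⋯ T_a · T_a ⋯ T_{a+j-2}` (0-based indices); for `a = 0` this is the
Jucys–Murphy element `ξ_j = T_{j−1}⋯T_1·T_1⋯T_{j−1}`. -/
def xiShift (a j : ℕ) : H :=
  𝒜.wordT (zetaWordBlock a j) * 𝒜.wordT (zetaWordBlock a j).reverse

/-- The standard monomial `ξ^u = ξ_1^{u_1} ⋯ ξ_r^{u_r}` in Jucys–Murphy elements. -/
def xiPow (r : ℕ) (u : ℕ → ℕ) : H :=
  ((List.range r).map fun i => 𝒜.xiShift 0 (i + 1) ^ u (i + 1)).prod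

/-- The square root `√(ξ^u) = (1)^{u_1}·(T_1)^{u_2}·(T_2T_1)^{u_3}⋯`. -/
def xiSqrt (r : ℕ) (u : ℕ → ℕ) : H :=
  ((List.range r).map fun i => 𝒜.wordT (zetaWordBlock 0 (i + 1)) ^ u (i + 1)).prod

/-- The direct product `ξ^{uu}` of standard monomials in the Jucys–Murphy
elements of each block of `H(S_I)`. -/
def xiUU (c : Composition n) (uu : ℕ → ℕ) : H :=
  (List.ofFn fun k : Fin c.length =>
    ((List.range (c.blocksFun k)).map fun j =>
      𝒜.xiShift (c.sizeUpTo k) (j + 1) ^ uu (c.sizeUpTo k + j)).prod).prod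

end HeckeAlgebra

/-! ### Auxiliary lemmas for Statement 5 -/

section AuxLen
variable {n : ℕ}

def invSet (w : Equiv.Perm (Fin n)) : Finset (Fin n × Fin n) :=
  Finset.univ.filter fun p => p.1 < p.2 ∧ w p.2 < w p.1

lemma len_eq_card (w : Equiv.Perm (Fin n)) : len w = (invSet w).card := rfl

lemma len_one : len (1 : Equiv.Perm (Fin n)) = 0 := by
  rw [len_eq_card, Finset.card_eq_zero]
  ext p
  simp only [invSet, Finset.mem_filter]
  simp only [invSet, Finset.mem_filter, Finset.mem_univ, true_and, Finset.notMem_empty,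
    iff_false, Equiv.Perm.one_apply]
  rintro ⟨h1, h2⟩; exact absurd h1 (not_lt.2 h2.le)

lemma len_inv (w : Equiv.Perm (Fin n)) : len w⁻¹ = len w := by
  rw [len_eq_card, len_eq_card]
  apply Finset.card_bij' (fun p _ => (w⁻¹ p.2, w⁻¹ p.1)) (fun p _ => (w p.2, w p.1))
  · intro p hp
    simp only [invSet, Finset.mem_filter, Finset.mem_univ, true_and] at hp ⊢
    exact ⟨hp.2, by simpa using hp.1⟩
  · intro p hp
    simp only [invSet, Finset.mem_filter, Finset.mem_univ, true_and] at hp ⊢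
    exact ⟨hp.2, by simpa using hp.1⟩
  · intro p hp; simp
  · intro p hp; simp

lemma adj_val {a : ℕ} (h : a + 1 < n) (x : Fin n) :
    ((adj n a x : Fin n) : ℕ) = if (x : ℕ) = a then a + 1 else if (x : ℕ) = a + 1 then a else x := by
  rw [adj, dif_pos h]
  rcases eq_or_ne x ⟨a, by omega⟩ with h1 | h1
  · subst h1; rw [Equiv.swap_apply_left]; simp
  rcases eq_or_ne x ⟨a + 1, h⟩ with h2 | h2
  · subst h2; rw [Equiv.swap_apply_right]
    rw [if_neg (show ¬(a + 1 = a) by omega), if_pos rfl]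
  · have hv1 : ¬((x : ℕ) = a) := fun hh => h1 (Fin.ext hh)
    have hv2 : ¬((x : ℕ) = a + 1) := fun hh => h2 (Fin.ext hh)
    rw [Equiv.swap_apply_of_ne_of_ne h1 h2, if_neg hv1, if_neg hv2]

lemma adj_inv (a : ℕ) : (adj n a)⁻¹ = adj n a := by
  unfold adj; split
  · exact Equiv.swap_inv _ _
  · rfl

lemma adj_mul_self (a : ℕ) : adj n a * adj n a = (1 : Equiv.Perm (Fin n)) := by
  unfold adj; split
  · exact Equiv.swap_mul_self _ _
  · exact one_mul 1

lemma len_mul_adj {a : ℕ} (ha : a + 1 < n) (w : Equiv.Perm (Fin n))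
    (hlt : w ⟨a, by omega⟩ < w ⟨a + 1, ha⟩) :
    len (w * adj n a) = len w + 1 := by
  classical
  set e1 : Fin n := ⟨a, by omega⟩ with he1
  set e2 : Fin n := ⟨a + 1, ha⟩ with he2
  set s := adj n a with hs
  have s_val : ∀ x : Fin n, ((s x : Fin n) : ℕ)
      = if (x : ℕ) = a then a + 1 else if (x : ℕ) = a + 1 then a else x := adj_val ha
  set pair : Fin n × Fin n := (e1, e2) with hpair
  set f : Fin n × Fin n → Fin n × Fin n :=
    fun p => if (s p.1 : Fin n) < s p.2 then (s p.1, s p.2) else (s p.2, s p.1) with hf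
  have hOrd : ∀ p : Fin n × Fin n, p.1 < p.2 → p ≠ pair → s p.1 < s p.2 := by
    rintro ⟨p1, p2⟩ hlt' hne
    replace hlt' : ((p1 : Fin n) : ℕ) < ((p2 : Fin n) : ℕ) := hlt'
    have hne' : ¬((p1 : ℕ) = a ∧ (p2 : ℕ) = a + 1) := by
      rintro ⟨h1, h2⟩
      exact hne (Prod.ext (Fin.ext h1) (Fin.ext h2))
    have h1 := s_val p1
    have h2 := s_val p2
    show s p1 < s p2
    rw [Fin.lt_def]
    split_ifs at h1 h2 <;> omega
  have hf_pair : f pair = pair := by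
    have h1 : ((s e1 : Fin n) : ℕ) = a + 1 := by
      rw [s_val]; rw [if_pos rfl]
    have h2 : ((s e2 : Fin n) : ℕ) = a := by
      rw [s_val]; rw [if_neg (show ¬(a + 1 = a) by omega), if_pos rfl]
    have : ¬ ((s pair.1 : Fin n) < s pair.2) := by
      rw [Fin.lt_def]; simp only [hpair]; omega
    rw [hf]; simp only [this, if_false]
    have e1' : s pair.2 = e1 := Fin.ext (by
      show ((s e2 : Fin n) : ℕ) = a
      rw [s_val]; rw [if_neg (show ¬(a + 1 = a) by omega), if_pos rfl])
    have e2' : s pair.1 = e2 := Fin.ext (by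
      show ((s e1 : Fin n) : ℕ) = a + 1
      rw [s_val]; rw [if_pos rfl])
    rw [hpair] at e1' e2' ⊢
    simp [e1', e2']
  have hss : ∀ x, s (s x) = x := by
    intro x
    have : s * s = 1 := adj_mul_self a
    calc s (s x) = (s * s) x := rfl
    _ = x := by rw [this]; rfl
  have hf_ne_pair : ∀ p : Fin n × Fin n, p.1 < p.2 → p ≠ pair →
      f p = (s p.1, s p.2) ∧ (s p.1 : Fin n) < s p.2 ∧ f p ≠ pair := by
    intro p h1 h2
    have ho := hOrd p h1 h2
    refine ⟨by rw [hf]; simp [ho], ho, ?_⟩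
    intro hcontra
    have : p = pair := by
      have hfst : s p.1 = e1 := by
        have : (f p).1 = e1 := by rw [hcontra]
        rw [hf] at this; simpa [ho] using this
      have hsnd : s p.2 = e2 := by
        have : (f p).2 = e2 := by rw [hcontra]
        rw [hf] at this; simpa [ho] using this
      have h1' : p.1 = s e1 := by rw [← hfst, hss]
      have h2' : p.2 = s e2 := by rw [← hsnd, hss]
      have hv1 : ((s e1 : Fin n) : ℕ) = a + 1 := by rw [s_val]; rw [if_pos rfl]
      have hv2 : ((s e2 : Fin n) : ℕ) = a := by
        rw [s_val]; rw [if_neg (show ¬(a + 1 = a) by omega), if_pos rfl]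
      rw [Fin.lt_def, h1', h2', hv1, hv2] at h1
      omega
    exact h2 this
  have hmemS1 : pair ∈ invSet (w * s) := by
    simp only [invSet, Finset.mem_filter, Finset.mem_univ, true_and]
    constructor
    · rw [Fin.lt_def]; simp [hpair, he1, he2]
    · have h1 : s pair.2 = e1 := Fin.ext (by
        show ((s e2 : Fin n) : ℕ) = a
        rw [s_val]; rw [if_neg (show ¬(a + 1 = a) by omega), if_pos rfl])
      have h2 : s pair.1 = e2 := Fin.ext (by
        show ((s e1 : Fin n) : ℕ) = a + 1
        rw [s_val]; rw [if_pos rfl])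
      show w (s pair.2) < w (s pair.1)
      rw [h1, h2]; exact hlt
  have hpair_not : pair ∉ invSet w := by
    simp only [invSet, Finset.mem_filter, Finset.mem_univ, true_and, not_and]
    intro _
    exact not_lt.2 hlt.le
  have key : (invSet (w * s)).card = (insert pair (invSet w)).card := by
    apply Finset.card_bij' (fun p _ => f p) (fun p _ => f p)
    · intro p hp
      simp only [invSet, Finset.mem_filter, Finset.mem_univ, true_and] at hp
      rcases eq_or_ne p pair with rfl | hne
      · rw [hf_pair]; exact Finset.mem_insert_self _ _
      · obtain ⟨hfp, ho, _⟩ := hf_ne_pair p hp.1 hne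
        apply Finset.mem_insert_of_mem
        simp only [invSet, Finset.mem_filter, Finset.mem_univ, true_and, hfp]
        refine ⟨ho, ?_⟩
        have := hp.2
        simpa using this
    · intro p hp
      rcases Finset.mem_insert.1 hp with rfl | hp'
      · rw [hf_pair]; exact hmemS1
      · have hne : p ≠ pair := fun h => hpair_not (h ▸ hp')
        simp only [invSet, Finset.mem_filter, Finset.mem_univ, true_and] at hp'
        obtain ⟨hfp, ho, _⟩ := hf_ne_pair p hp'.1 hne
        simp only [invSet, Finset.mem_filter, Finset.mem_univ, true_and, hfp]
        refine ⟨ho, ?_⟩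
        show w (s (s p.2)) < w (s (s p.1))
        rw [hss, hss]; exact hp'.2
    · intro p hp
      simp only [invSet, Finset.mem_filter, Finset.mem_univ, true_and] at hp
      rcases eq_or_ne p pair with rfl | hne
      · rw [hf_pair, hf_pair]
      · obtain ⟨hfp, ho, hfne⟩ := hf_ne_pair p hp.1 hne
        have h2 : (f p).1 < (f p).2 := by rw [hfp]; exact ho
        obtain ⟨hfp2, _, _⟩ := hf_ne_pair (f p) h2 hfne
        rw [hfp2, hfp]
        simp [hss]
    · intro p hp
      rcases Finset.mem_insert.1 hp with rfl | hp'
      · rw [hf_pair, hf_pair]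
      · have hne : p ≠ pair := fun h => hpair_not (h ▸ hp')
        simp only [invSet, Finset.mem_filter, Finset.mem_univ, true_and] at hp'
        obtain ⟨hfp, ho, hfne⟩ := hf_ne_pair p hp'.1 hne
        have h2 : (f p).1 < (f p).2 := by rw [hfp]; exact ho
        obtain ⟨hfp2, _, _⟩ := hf_ne_pair (f p) h2 hfne
        rw [hfp2, hfp]
        simp [hss]
  rw [len_eq_card, len_eq_card, key, Finset.card_insert_of_notMem hpair_not]

lemma len_adj {a : ℕ} (h : a + 1 < n) : len (adj n a) = 1 := by
  have := len_mul_adj h 1 (by rw [Fin.lt_def]; simp)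
  rwa [one_mul, len_one, zero_add] at this

lemma zwb_one (a : ℕ) : zetaWordBlock a 1 = [] := rfl

lemma zwb_cons (a m : ℕ) : zetaWordBlock a (m + 2) = (a + m) :: zetaWordBlock a (m + 1) := by
  unfold zetaWordBlock
  simp [List.range_succ]

lemma zwb_append (a m : ℕ) : zetaWordBlock a (m + 2) = zetaWordBlock (a + 1) (m + 1) ++ [a] := by
  induction m generalizing a with
  | zero => simp [zetaWordBlock, List.range_succ]
  | succ m ih =>
    rw [show m + 1 + 2 = m + 3 from rfl, zwb_cons a (m + 1), ih a, zwb_cons (a + 1) m]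
    rw [show a + 1 + m = a + (m + 1) from by omega]
    rfl

lemma jm_one (a : ℕ) : jmPerm n a 1 = 1 := rfl

lemma jm_cons (a m : ℕ) : jmPerm n a (m + 2) = adj n (a + m) * jmPerm n a (m + 1) := by
  unfold jmPerm; rw [zwb_cons]; simp

lemma jm_append (a m : ℕ) : jmPerm n a (m + 2) = jmPerm n (a + 1) (m + 1) * adj n a := by
  unfold jmPerm; rw [zwb_append]; simp

lemma jm_val {a m : ℕ} (h : a + m + 1 ≤ n) (x : Fin n) :
    ((jmPerm n a (m + 1) x : Fin n) : ℕ) =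
      if (x : ℕ) = a then a + m
      else if a < (x : ℕ) ∧ (x : ℕ) ≤ a + m then (x : ℕ) - 1 else (x : ℕ) := by
  revert h
  induction m with
  | zero =>
    intro h
    rw [jm_one]
    simp only [Equiv.Perm.one_apply]
    split_ifs <;> omega
  | succ m ih =>
    intro h
    rw [jm_cons]
    have hx := ih (by omega)
    show ((adj n (a + m) (jmPerm n a (m + 1) x) : Fin n) : ℕ) = _
    rw [adj_val (show a + m + 1 < n by omega), hx]
    split_ifs <;> omega

lemma jm_fix {a m : ℕ} (h : a + m + 1 ≤ n) (x : Fin n)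
    (hx : (x : ℕ) < a ∨ a + m < (x : ℕ)) : jmPerm n a (m + 1) x = x := by
  apply Fin.ext
  rw [jm_val h]
  split_ifs <;> omega

lemma jm_start {a m : ℕ} (h : a + m + 1 ≤ n) :
    jmPerm n a (m + 1) ⟨a, by omega⟩ = ⟨a + m, by omega⟩ := by
  apply Fin.ext
  rw [jm_val h]
  simp

lemma jm_mid {a m : ℕ} (h : a + m + 1 ≤ n) (x : ℕ) (hx1 : a < x) (hx2 : x ≤ a + m) :
    jmPerm n a (m + 1) ⟨x, by omega⟩ = ⟨x - 1, by omega⟩ := by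
  apply Fin.ext
  rw [jm_val h]
  simp only [Fin.val]
  split_ifs <;> omega

lemma fix_inv {w : Equiv.Perm (Fin n)} {x : Fin n} (h : w x = x) : w⁻¹ x = x := by
  conv_lhs => rw [← h]
  exact Equiv.Perm.inv_eq_iff_eq.mpr rfl

lemma fix_high_apply_lt {K : ℕ} (w : Equiv.Perm (Fin n))
    (hw : ∀ x : Fin n, K ≤ (x : ℕ) → w x = x) (x : Fin n) (hx : (x : ℕ) < K) :
    ((w x : Fin n) : ℕ) < K := by
  by_contra hc
  push_neg at hc
  have h1 : w (w x) = w x := hw (w x) hc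
  have h2 : w x = x := w.injective h1
  rw [h2] at hc
  omega

lemma fix_low_apply_ge {A : ℕ} (w : Equiv.Perm (Fin n))
    (h2 : ∀ x : Fin n, (x : ℕ) < A → ((w x : Fin n) : ℕ) < A) (x : Fin n) (hx : A ≤ (x : ℕ)) :
    A ≤ ((w x : Fin n) : ℕ) := by
  classical
  by_contra hc
  push_neg at hc
  set S : Finset (Fin n) := Finset.univ.filter (fun y => (y : ℕ) < A) with hS
  have hsub : S.image w ⊆ S := by
    intro y hy
    simp only [hS, Finset.mem_image, Finset.mem_filter, Finset.mem_univ, true_and] at hy ⊢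
    obtain ⟨z, hz, rfl⟩ := hy
    exact h2 z hz
  have hcard : (S.image w).card = S.card := Finset.card_image_of_injective _ w.injective
  have heq : S.image w = S := Finset.eq_of_subset_of_card_le hsub (le_of_eq hcard.symm)
  have hmem : w x ∈ S := by
    simp only [hS, Finset.mem_filter, Finset.mem_univ, true_and]; exact hc
  rw [← heq] at hmem
  obtain ⟨y, hy, hxy⟩ := Finset.mem_image.1 hmem
  have hyx : y = x := w.injective hxy
  subst hyx
  simp only [hS, Finset.mem_filter, Finset.mem_univ, true_and] at hy
  omega

lemma inv_low {A : ℕ} (w : Equiv.Perm (Fin n))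
    (hw : ∀ x : Fin n, A ≤ (x : ℕ) → w x = x) {p1 p2 : Fin n}
    (h12 : p1 < p2) (hinv : w p2 < w p1) : (p2 : ℕ) < A := by
  by_contra hc
  push_neg at hc
  rw [hw p2 hc] at hinv
  rcases lt_or_ge ((p1 : Fin n) : ℕ) A with hp1 | hp1
  · have := fix_high_apply_lt w hw p1 hp1
    rw [Fin.lt_def] at hinv; omega
  · rw [hw p1 hp1] at hinv
    rw [Fin.lt_def] at hinv h12; omega

lemma inv_high {A : ℕ} (v : Equiv.Perm (Fin n))
    (hv : ∀ x : Fin n, (x : ℕ) < A → v x = x) {p1 p2 : Fin n}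
    (h12 : p1 < p2) (hinv : v p2 < v p1) : A ≤ (p1 : ℕ) := by
  by_contra hc
  push_neg at hc
  rw [hv p1 hc] at hinv
  rcases lt_or_ge ((p2 : Fin n) : ℕ) A with hp2 | hp2
  · rw [hv p2 hp2] at hinv
    rw [Fin.lt_def] at hinv h12; omega
  · have hv' : A ≤ ((v p2 : Fin n) : ℕ) :=
      fix_low_apply_ge v (fun x hx => by rw [hv x hx]; exact hx) p2 hp2
    rw [Fin.lt_def] at hinv; omega

lemma len_mul_disjoint {A : ℕ} (w v : Equiv.Perm (Fin n))
    (hw : ∀ x : Fin n, A ≤ (x : ℕ) → w x = x)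
    (hv : ∀ x : Fin n, (x : ℕ) < A → v x = x) :
    len (w * v) = len w + len v := by
  classical
  have hv' : ∀ x : Fin n, A ≤ (x : ℕ) → A ≤ ((v x : Fin n) : ℕ) :=
    fix_low_apply_ge v (fun x hx => by rw [hv x hx]; exact hx)
  have key : invSet (w * v) = invSet w ∪ invSet v := by
    ext p
    obtain ⟨p1, p2⟩ := p
    simp only [invSet, Finset.mem_filter]
    simp only [invSet, Finset.mem_filter, Finset.mem_univ, true_and, Finset.mem_union,
      Equiv.Perm.mul_apply]
    constructor
    · rintro ⟨h12, hinv⟩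
      rcases lt_or_ge ((p2 : Fin n) : ℕ) A with hp2 | hp2
      · have hp1 : ((p1 : Fin n) : ℕ) < A := by rw [Fin.lt_def] at h12; omega
        left
        rw [hv p1 hp1, hv p2 hp2] at hinv
        exact ⟨h12, hinv⟩
      · rcases lt_or_ge ((p1 : Fin n) : ℕ) A with hp1 | hp1
        · exfalso
          rw [hv p1 hp1] at hinv
          have h1 : w (v p2) = v p2 := hw (v p2) (hv' p2 hp2)
          have h2 := fix_high_apply_lt w hw p1 hp1
          rw [h1, Fin.lt_def] at hinv
          have := hv' p2 hp2
          omega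
        · right
          rw [hw (v p1) (hv' p1 hp1), hw (v p2) (hv' p2 hp2)] at hinv
          exact ⟨h12, hinv⟩
    · rintro (⟨h12, hinv⟩ | ⟨h12, hinv⟩)
      · have hp2 := inv_low w hw h12 hinv
        have hp1 : ((p1 : Fin n) : ℕ) < A := by rw [Fin.lt_def] at h12; omega
        refine ⟨h12, ?_⟩
        rw [hv p1 hp1, hv p2 hp2]
        exact hinv
      · have hp1 := inv_high v hv h12 hinv
        have hp2 : A ≤ ((p2 : Fin n) : ℕ) := by rw [Fin.lt_def] at h12; omega
        refine ⟨h12, ?_⟩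
        rw [hw (v p1) (hv' p1 hp1), hw (v p2) (hv' p2 hp2)]
        exact hinv
  have hdisj : Disjoint (invSet w) (invSet v) := by
    rw [Finset.disjoint_left]
    rintro ⟨p1, p2⟩ hw1 hv1
    simp only [invSet, Finset.mem_filter, Finset.mem_univ, true_and] at hw1 hv1
    have h1 := inv_low w hw hw1.1 hw1.2
    have h2 := inv_high v hv hv1.1 hv1.2
    rw [Fin.lt_def] at hw1
    omega
  rw [len_eq_card, len_eq_card, len_eq_card, key, Finset.card_union_of_disjoint hdisj]

lemma perm_eq_one_of_ascents (w : Equiv.Perm (Fin n))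
    (hasc : ∀ i : ℕ, (h : i + 1 < n) → w ⟨i, by omega⟩ < w ⟨i + 1, h⟩) : w = 1 := by
  have hle : ∀ k : ℕ, ∀ x : Fin n, (x : ℕ) = k → k ≤ ((w x : Fin n) : ℕ) := by
    intro k
    induction k with
    | zero => intro x _; omega
    | succ k ih =>
      intro x hx
      have hkn : k + 1 < n := hx ▸ x.isLt
      have h1 := hasc k hkn
      have h2 := ih ⟨k, by omega⟩ rfl
      have hxx : x = ⟨k + 1, hkn⟩ := Fin.ext hx
      rw [Fin.lt_def] at h1
      rw [hxx]
      omega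
  have hsum : ∑ x : Fin n, ((w x : Fin n) : ℕ) = ∑ x : Fin n, ((x : Fin n) : ℕ) :=
    Equiv.sum_comp w (fun x : Fin n => (x : ℕ))
  have hpt : ∀ x : Fin n, ((x : Fin n) : ℕ) = ((w x : Fin n) : ℕ) := by
    have := (Finset.sum_eq_sum_iff_of_le
      (f := fun x : Fin n => ((x : Fin n) : ℕ)) (g := fun x : Fin n => ((w x : Fin n) : ℕ))
      (fun i _ => hle (i : ℕ) i rfl)).1 hsum.symm
    intro x
    exact this x (Finset.mem_univ x)
  exact Equiv.ext fun x => Fin.ext (hpt x).symm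

lemma len_mul_adj_descent {a : ℕ} (ha : a + 1 < n) (w : Equiv.Perm (Fin n))
    (hgt : w ⟨a + 1, ha⟩ < w ⟨a, by omega⟩) :
    len (w * adj n a) + 1 = len w := by
  have he1 : adj n a ⟨a, by omega⟩ = ⟨a + 1, ha⟩ := by
    apply Fin.ext
    rw [adj_val ha]
    simp
  have he2 : adj n a ⟨a + 1, ha⟩ = ⟨a, by omega⟩ := by
    apply Fin.ext
    rw [adj_val ha]
    rw [if_neg (show ¬(a + 1 = a) by omega), if_pos rfl]
  have hcond : (w * adj n a) ⟨a, by omega⟩ < (w * adj n a) ⟨a + 1, ha⟩ := by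
    show w (adj n a ⟨a, by omega⟩) < w (adj n a ⟨a + 1, ha⟩)
    rw [he1, he2]
    exact hgt
  have h := len_mul_adj ha (w * adj n a) hcond
  have hww : (w * adj n a) * adj n a = w := by
    rw [mul_assoc, adj_mul_self, mul_one]
  rw [hww] at h
  omega

end AuxLen

section AuxHecke
variable {n : ℕ} {R : Type} [CommRing R] {q : Rˣ} {H : Type} [Ring H] [Algebra R H]
variable (𝒜 : HeckeAlgebra n R q H)

lemma wordT_nil : 𝒜.wordT [] = 1 := rfl

lemma wordT_cons (a : ℕ) (l : List ℕ) :
    𝒜.wordT (a :: l) = 𝒜.T (adj n a) * 𝒜.wordT l := by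
  unfold HeckeAlgebra.wordT; simp

lemma wordT_append (l l' : List ℕ) : 𝒜.wordT (l ++ l') = 𝒜.wordT l * 𝒜.wordT l' := by
  unfold HeckeAlgebra.wordT; simp

lemma blockStep (a m : ℕ) (h : a + m + 1 ≤ n) (w : Equiv.Perm (Fin n))
    (hw : ∀ x : Fin n, a + m ≤ (x : ℕ) → w x = x) :
    len (w * jmPerm n a (m + 1)) = len w + m ∧
      𝒜.T w * 𝒜.wordT (zetaWordBlock a (m + 1)) = 𝒜.T (w * jmPerm n a (m + 1)) := by
  induction m generalizing a w with
  | zero =>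
    rw [jm_one, zwb_one, mul_one]
    exact ⟨rfl, by rw [wordT_nil, mul_one]⟩
  | succ m ih =>
    have h' : (a + 1) + m + 1 ≤ n := by omega
    have hw' : ∀ x : Fin n, (a + 1) + m ≤ (x : ℕ) → w x = x := fun x hx => hw x (by omega)
    obtain ⟨ihlen, ihT⟩ := ih (a + 1) h' w hw'
    set v := w * jmPerm n (a + 1) (m + 1) with hv
    have hva : ((v ⟨a, by omega⟩ : Fin n) : ℕ) ≤ a + m := by
      show ((w (jmPerm n (a + 1) (m + 1) ⟨a, by omega⟩) : Fin n) : ℕ) ≤ a + m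
      have h1 : jmPerm n (a + 1) (m + 1) ⟨a, by omega⟩ = ⟨a, by omega⟩ :=
        jm_fix (by omega) _ (by simp)
      rw [h1]
      have := fix_high_apply_lt (K := a + m + 1) w hw ⟨a, by omega⟩ (by simp)
      omega
    have hvb : ((v ⟨a + 1, by omega⟩ : Fin n) : ℕ) = a + m + 1 := by
      show ((w (jmPerm n (a + 1) (m + 1) ⟨a + 1, by omega⟩) : Fin n) : ℕ) = a + m + 1
      have h1 : jmPerm n (a + 1) (m + 1) ⟨a + 1, by omega⟩ = ⟨a + 1 + m, by omega⟩ :=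
        jm_start (by omega)
      rw [h1, hw ⟨a + 1 + m, by omega⟩ (by simp; omega)]
      simp; omega
    have hcond : v ⟨a, by omega⟩ < v ⟨a + 1, by omega⟩ := by
      rw [Fin.lt_def]; omega
    have hlen := len_mul_adj (show a + 1 < n by omega) v hcond
    have hT : 𝒜.T v * 𝒜.T (adj n a) = 𝒜.T (v * adj n a) :=
      𝒜.T_mul v (adj n a) (by rw [len_adj (show a + 1 < n by omega)]; omega)
    have hjm : w * jmPerm n a (m + 2) = v * adj n a := by
      rw [jm_append, hv, mul_assoc]
    constructor
    · rw [hjm, hlen, ihlen]; omega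
    · rw [zwb_append a m, wordT_append, ← mul_assoc, ihT]
      have hw1 : 𝒜.wordT [a] = 𝒜.T (adj n a) := by rw [wordT_cons, wordT_nil, mul_one]
      rw [hw1, hT, hjm]

lemma len_jm (𝒜 : HeckeAlgebra n R q H) (a m : ℕ) (h : a + m + 1 ≤ n) :
    len (jmPerm n a (m + 1)) = m := by
  have := (blockStep 𝒜 a m h 1 (fun x _ => rfl)).1
  rwa [one_mul, len_one, zero_add] at this

lemma T_jm (a m : ℕ) (h : a + m + 1 ≤ n) :
    𝒜.wordT (zetaWordBlock a (m + 1)) = 𝒜.T (jmPerm n a (m + 1)) := by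
  have := (blockStep 𝒜 a m h 1 (fun x _ => rfl)).2
  rwa [𝒜.T_one, one_mul, one_mul] at this

lemma invBlockStep (a m : ℕ) (h : a + m + 1 ≤ n) :
    𝒜.wordT ((zetaWordBlock a (m + 1)).reverse) = 𝒜.T (jmPerm n a (m + 1))⁻¹ := by
  induction m with
  | zero =>
    rw [zwb_one]
    show 𝒜.wordT [] = 𝒜.T (jmPerm n a 1)⁻¹
    rw [jm_one, inv_one, 𝒜.T_one, wordT_nil]
  | succ m ih =>
    have h' : a + m + 1 ≤ n := by omega
    rw [zwb_cons, List.reverse_cons, wordT_append, ih h']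
    have hw1 : 𝒜.wordT [a + m] = 𝒜.T (adj n (a + m)) := by
      rw [wordT_cons, wordT_nil, mul_one]
    rw [hw1]
    set qq := (jmPerm n a (m + 1))⁻¹ with hqq
    have hma : a + m < n := by omega
    have hma1 : a + m + 1 < n := by omega
    have han : a < n := by omega
    have hq1 : qq ⟨a + m, hma⟩ = ⟨a, han⟩ := by
      apply (jmPerm n a (m + 1)).injective
      rw [hqq, ← Equiv.Perm.mul_apply, mul_inv_cancel, Equiv.Perm.one_apply]
      exact (jm_start h').symm
    have hq2 : qq ⟨a + m + 1, hma1⟩ = ⟨a + m + 1, hma1⟩ := by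
      apply (jmPerm n a (m + 1)).injective
      rw [hqq, ← Equiv.Perm.mul_apply, mul_inv_cancel, Equiv.Perm.one_apply]
      exact (jm_fix h' _ (by simp)).symm
    have hcond : qq ⟨a + m, hma⟩ < qq ⟨a + m + 1, hma1⟩ := by
      rw [hq1, hq2]
      exact Fin.mk_lt_mk.mpr (by omega)
    have hlen := len_mul_adj hma1 qq hcond
    have hT : 𝒜.T qq * 𝒜.T (adj n (a + m)) = 𝒜.T (qq * adj n (a + m)) :=
      𝒜.T_mul qq (adj n (a + m)) (by rw [len_adj (show a + m + 1 < n by omega)]; omega)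
    rw [hT]
    congr 1
    rw [jm_cons, mul_inv_rev, hqq, adj_inv]

lemma xiShift_eq (a m : ℕ) (h : a + m + 1 ≤ n) :
    𝒜.xiShift a (m + 1) = 𝒜.T (jmPerm n a (m + 1)) * 𝒜.T (jmPerm n a (m + 1))⁻¹ := by
  unfold HeckeAlgebra.xiShift
  rw [T_jm 𝒜 a m h, invBlockStep 𝒜 a m h]

lemma commGen (A m : ℕ) (h : A + m + 1 ≤ n) (i : ℕ)
    (hi : i + 1 < A ∨ (A ≤ i ∧ i + 1 < A + m)) :
    𝒜.T (adj n i) * 𝒜.xiShift A (m + 1) = 𝒜.xiShift A (m + 1) * 𝒜.T (adj n i) := by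
  set c := jmPerm n A (m + 1) with hc
  have hin : i + 1 < n := by omega
  have lc : len c = m := len_jm 𝒜 A m h
  have lcinv : len c⁻¹ = m := by rw [len_inv]; exact lc
  rw [xiShift_eq 𝒜 A m h, ← hc]
  rcases hi with hlow | ⟨hge, hlt⟩
  · have hcom : adj n i * c = c * adj n i := by
      apply Equiv.ext; intro x; apply Fin.ext
      show ((adj n i (c x) : Fin n) : ℕ) = ((c (adj n i x) : Fin n) : ℕ)
      rw [adj_val hin, hc, jm_val (by omega), jm_val (by omega), adj_val hin]
      split_ifs <;> omega
    have hcomm : Commute (adj n i) c := hcom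
    have hcom' : adj n i * c⁻¹ = c⁻¹ * adj n i := hcomm.inv_right
    have hfix1 : c ⟨i, by omega⟩ = ⟨i, by omega⟩ := jm_fix (by omega) _ (by simp; omega)
    have hfix2 : c ⟨i + 1, by omega⟩ = ⟨i + 1, by omega⟩ := jm_fix (by omega) _ (by simp; omega)
    have l1 : len (c * adj n i) = m + 1 := by
      rw [← lc]
      exact len_mul_adj hin c (by rw [hfix1, hfix2, Fin.lt_def]; simp)
    have l2 : len (c⁻¹ * adj n i) = m + 1 := by
      rw [← lcinv]
      exact len_mul_adj hin c⁻¹ (by rw [fix_inv hfix1, fix_inv hfix2, Fin.lt_def]; simp)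
    have t1 : 𝒜.T (adj n i) * 𝒜.T c = 𝒜.T c * 𝒜.T (adj n i) := by
      rw [𝒜.T_mul (adj n i) c (by rw [hcom, l1, len_adj hin, lc]; omega),
        𝒜.T_mul c (adj n i) (by rw [l1, len_adj hin, lc]), hcom]
    have t2 : 𝒜.T (adj n i) * 𝒜.T c⁻¹ = 𝒜.T c⁻¹ * 𝒜.T (adj n i) := by
      rw [𝒜.T_mul (adj n i) c⁻¹ (by rw [hcom', l2, len_adj hin, lcinv]; omega),
        𝒜.T_mul c⁻¹ (adj n i) (by rw [l2, len_adj hin, lcinv]), hcom']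
    rw [← mul_assoc, t1, mul_assoc, t2, ← mul_assoc]
  · have hin2 : i + 2 < n := by omega
    have hcom : adj n i * c = c * adj n (i + 1) := by
      apply Equiv.ext; intro x; apply Fin.ext
      show ((adj n i (c x) : Fin n) : ℕ) = ((c (adj n (i + 1) x) : Fin n) : ℕ)
      rw [adj_val hin, hc, jm_val (by omega), jm_val (by omega),
        adj_val (show i + 1 + 1 < n by omega)]
      split_ifs <;> omega
    have hcom2 : adj n (i + 1) * c⁻¹ = c⁻¹ * adj n i := by
      calc adj n (i + 1) * c⁻¹ = c⁻¹ * (c * adj n (i + 1)) * c⁻¹ := by group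
      _ = c⁻¹ * (adj n i * c) * c⁻¹ := by rw [hcom]
      _ = c⁻¹ * adj n i := by group
    have hi0 : i < n := by omega
    have hi2 : i + 1 + 1 < n := by omega
    have hcm1 : c ⟨i + 1, hin⟩ = ⟨i, hi0⟩ :=
      jm_mid (n := n) (a := A) (m := m) (by omega) (i + 1) (by omega) (by omega)
    have hcm2 : c ⟨i + 1 + 1, hi2⟩ = ⟨i + 1, hin⟩ :=
      jm_mid (n := n) (a := A) (m := m) (by omega) (i + 2) (by omega) (by omega)
    have l1 : len (c * adj n (i + 1)) = m + 1 := by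
      rw [← lc]
      refine len_mul_adj hi2 c ?_
      show c ⟨i + 1, hin⟩ < c ⟨i + 1 + 1, hi2⟩
      rw [hcm1, hcm2]
      exact Fin.mk_lt_mk.mpr (by omega)
    have hcinv1 : c⁻¹ ⟨i, hi0⟩ = ⟨i + 1, hin⟩ := by
      apply c.injective
      rw [← Equiv.Perm.mul_apply, mul_inv_cancel, Equiv.Perm.one_apply, hcm1]
    have hcinv2 : c⁻¹ ⟨i + 1, hin⟩ = ⟨i + 1 + 1, hi2⟩ := by
      apply c.injective
      rw [← Equiv.Perm.mul_apply, mul_inv_cancel, Equiv.Perm.one_apply, hcm2]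
    have l2 : len (c⁻¹ * adj n i) = m + 1 := by
      rw [← lcinv]
      refine len_mul_adj hin c⁻¹ ?_
      show c⁻¹ ⟨i, hi0⟩ < c⁻¹ ⟨i + 1, hin⟩
      rw [hcinv1, hcinv2]
      exact Fin.mk_lt_mk.mpr (by omega)
    have t1 : 𝒜.T (adj n i) * 𝒜.T c = 𝒜.T (adj n i * c) :=
      𝒜.T_mul _ _ (by rw [hcom, l1, len_adj hin, lc]; omega)
    have t1' : 𝒜.T c * 𝒜.T (adj n (i + 1)) = 𝒜.T (c * adj n (i + 1)) :=
      𝒜.T_mul _ _ (by rw [l1, len_adj (show i + 1 + 1 < n by omega), lc])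
    have t2 : 𝒜.T (adj n (i + 1)) * 𝒜.T c⁻¹ = 𝒜.T (adj n (i + 1) * c⁻¹) :=
      𝒜.T_mul _ _ (by rw [hcom2, l2, len_adj (show i + 1 + 1 < n by omega), lcinv]; omega)
    have t2' : 𝒜.T c⁻¹ * 𝒜.T (adj n i) = 𝒜.T (c⁻¹ * adj n i) :=
      𝒜.T_mul _ _ (by rw [l2, len_adj hin, lcinv])
    calc 𝒜.T (adj n i) * (𝒜.T c * 𝒜.T c⁻¹)
        = (𝒜.T (adj n i) * 𝒜.T c) * 𝒜.T c⁻¹ := by rw [mul_assoc]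
      _ = 𝒜.T (c * adj n (i + 1)) * 𝒜.T c⁻¹ := by rw [t1, hcom]
      _ = (𝒜.T c * 𝒜.T (adj n (i + 1))) * 𝒜.T c⁻¹ := by rw [t1']
      _ = 𝒜.T c * (𝒜.T (adj n (i + 1)) * 𝒜.T c⁻¹) := by rw [mul_assoc]
      _ = 𝒜.T c * 𝒜.T (c⁻¹ * adj n i) := by rw [t2, hcom2]
      _ = 𝒜.T c * (𝒜.T c⁻¹ * 𝒜.T (adj n i)) := by rw [t2']
      _ = (𝒜.T c * 𝒜.T c⁻¹) * 𝒜.T (adj n i) := by rw [mul_assoc]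

lemma commE (A m : ℕ) (h : A + m + 1 ≤ n) (w : Equiv.Perm (Fin n))
    (h1 : ∀ x : Fin n, A + m ≤ (x : ℕ) → w x = x)
    (h2 : ∀ x : Fin n, (x : ℕ) < A → ((w x : Fin n) : ℕ) < A) :
    𝒜.T w * 𝒜.xiShift A (m + 1) = 𝒜.xiShift A (m + 1) * 𝒜.T w := by
  have main : ∀ L : ℕ, ∀ w : Equiv.Perm (Fin n), len w = L →
      (∀ x : Fin n, A + m ≤ (x : ℕ) → w x = x) →
      (∀ x : Fin n, (x : ℕ) < A → ((w x : Fin n) : ℕ) < A) →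
      𝒜.T w * 𝒜.xiShift A (m + 1) = 𝒜.xiShift A (m + 1) * 𝒜.T w := by
    intro L
    induction L using Nat.strong_induction_on with
    | _ L ih =>
      intro w hL h1 h2
      by_cases hw1 : w = 1
      · subst hw1; rw [𝒜.T_one, one_mul, mul_one]
      · have hdesc : ∃ i : ℕ, ∃ hi : i + 1 < n,
            w ⟨i + 1, hi⟩ < w ⟨i, Nat.lt_of_succ_lt hi⟩ := by
          by_contra hcon
          push_neg at hcon
          apply hw1
          apply perm_eq_one_of_ascents
          intro i hi
          have hno := hcon i hi
          have hne : w ⟨i, by omega⟩ ≠ w ⟨i + 1, hi⟩ := by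
            intro heq
            have := w.injective heq
            rw [Fin.ext_iff] at this
            simp at this
          exact lt_of_le_of_ne hno hne
        obtain ⟨i, hin, hdes⟩ := hdesc
        have hge : ∀ x : Fin n, A ≤ (x : ℕ) → A ≤ ((w x : Fin n) : ℕ) :=
          fix_low_apply_ge w h2
        have hallowed : i + 1 < A ∨ (A ≤ i ∧ i + 1 < A + m) := by
          by_contra hcon
          push_neg at hcon
          obtain ⟨hc1, hc2⟩ := hcon
          have hAi : A ≤ i + 1 := by omega
          rcases eq_or_lt_of_le hAi with hA1 | hA2
          · have ha := h2 ⟨i, Nat.lt_of_succ_lt hin⟩ (by simp; omega)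
            have hb := hge ⟨i + 1, hin⟩ (by simp; omega)
            rw [Fin.lt_def] at hdes; omega
          · have hAm : A + m ≤ i + 1 := hc2 (by omega)
            rcases eq_or_lt_of_le hAm with hE | hE
            · have ha := h1 ⟨i + 1, hin⟩ (by simp; omega)
              have hb := fix_high_apply_lt (K := A + m) w h1
                ⟨i, Nat.lt_of_succ_lt hin⟩ (by simp; omega)
              rw [ha, Fin.lt_def] at hdes
              simp only [Fin.val_mk] at hdes ⊢
              omega
            · have ha := h1 ⟨i, Nat.lt_of_succ_lt hin⟩ (by simp; omega)
              have hb := h1 ⟨i + 1, hin⟩ (by simp; omega)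
              rw [ha, hb] at hdes
              exact absurd (Fin.mk_lt_mk.mp hdes) (by omega)
        set w' := w * adj n i with hw'
        have hlen' := len_mul_adj_descent hin w hdes
        rw [← hw'] at hlen' 
        have hadjfix : ∀ x : Fin n, A + m ≤ (x : ℕ) → adj n i x = x := by
          intro x hx
          apply Fin.ext
          rw [adj_val hin]
          rw [if_neg (by omega), if_neg (by omega)]
        have hw'1 : ∀ x : Fin n, A + m ≤ (x : ℕ) → w' x = x := by
          intro x hx
          show w (adj n i x) = x
          rw [hadjfix x hx]
          exact h1 x hx
        have hw'2 : ∀ x : Fin n, (x : ℕ) < A → ((w' x : Fin n) : ℕ) < A := by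
          intro x hx
          show ((w (adj n i x) : Fin n) : ℕ) < A
          have hlt : ((adj n i x : Fin n) : ℕ) < A := by
            rw [adj_val hin]
            split_ifs <;> omega
          exact h2 _ hlt
        have hww : w' * adj n i = w := by
          rw [hw', mul_assoc, adj_mul_self, mul_one]
        have hTsplit : 𝒜.T w = 𝒜.T w' * 𝒜.T (adj n i) := by
          rw [𝒜.T_mul w' (adj n i) (by rw [hww, len_adj hin]; omega), hww]
        rw [hTsplit, mul_assoc, commGen 𝒜 A m h i hallowed, ← mul_assoc,
          ih (len w') (by omega) w' rfl hw'1 hw'2, mul_assoc]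
  exact main (len w) w rfl h1 h2

lemma blockLocal (A : ℕ) (uu : ℕ → ℕ) (huu : ∀ p, uu p ≤ 1) :
    ∀ M, A + M ≤ n →
    (∀ x : Fin n, ((x : ℕ) < A ∨ A + M ≤ (x : ℕ)) →
        (((List.range M).map fun j => jmPerm n A (j + 1) ^ uu (A + j)).prod) x = x) ∧
    len (((List.range M).map fun j => jmPerm n A (j + 1) ^ uu (A + j)).prod)
        = ∑ j ∈ Finset.range M, uu (A + j) * j ∧
    ((List.range M).map fun j => 𝒜.wordT (zetaWordBlock A (j + 1)) ^ uu (A + j)).prod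
        = 𝒜.T (((List.range M).map fun j => jmPerm n A (j + 1) ^ uu (A + j)).prod) ∧
    ((List.range M).map fun j => 𝒜.xiShift A (j + 1) ^ uu (A + j)).prod
        = 𝒜.T (((List.range M).map fun j => jmPerm n A (j + 1) ^ uu (A + j)).prod) *
          𝒜.T (((List.range M).map fun j => jmPerm n A (j + 1) ^ uu (A + j)).prod)⁻¹ := by
  intro M
  induction M with
  | zero =>
    intro _
    refine ⟨fun x _ => rfl, ?_, ?_, ?_⟩
    · simp [len_one]
    · simp [𝒜.T_one]
    · simp [𝒜.T_one]
  | succ M ihM =>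
    intro hM
    obtain ⟨ihfix, ihlen, ihsqrt, ihxi⟩ := ihM (by omega)
    set v := ((List.range M).map fun j => jmPerm n A (j + 1) ^ uu (A + j)).prod with hvdef
    have hvhigh : ∀ x : Fin n, A + M ≤ (x : ℕ) → v x = x := fun x hx => ihfix x (Or.inr hx)
    have hvlow : ∀ x : Fin n, (x : ℕ) < A → v x = x := fun x hx => ihfix x (Or.inl hx)
    have hrange : List.range (M + 1) = List.range M ++ [M] := List.range_succ (n := M)
    rcases Nat.le_one_iff_eq_zero_or_eq_one.1 (huu (A + M)) with he | he
    · refine ⟨?_, ?_, ?_, ?_⟩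
      · intro x hx
        rw [hrange]
        simp only [List.map_append, List.prod_append, List.map_cons, List.map_nil,
          List.prod_cons, List.prod_nil, he, pow_zero, mul_one]
        exact ihfix x (by omega)
      · rw [hrange]
        simp only [List.map_append, List.prod_append, List.map_cons, List.map_nil,
          List.prod_cons, List.prod_nil, he, pow_zero, mul_one]
        rw [Finset.sum_range_succ, he, ihlen]
        simp
      · rw [hrange]
        simp only [List.map_append, List.prod_append, List.map_cons, List.map_nil,
          List.prod_cons, List.prod_nil, he, pow_zero, mul_one]
        exact ihsqrt
      · rw [hrange]
        simp only [List.map_append, List.prod_append, List.map_cons, List.map_nil,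
          List.prod_cons, List.prod_nil, he, pow_zero, mul_one]
        exact ihxi
    · set c := jmPerm n A (M + 1) with hcdef
      have hAM : A + M + 1 ≤ n := hM
      have lc : len c = M := len_jm 𝒜 A M hAM
      obtain ⟨bslen, bsT⟩ := blockStep 𝒜 A M hAM v hvhigh
      have hTv : 𝒜.T v * 𝒜.T c = 𝒜.T (v * c) :=
        𝒜.T_mul v c (by rw [bslen, lc])
      have hleninv : len (c⁻¹ * v⁻¹) = len c⁻¹ + len v⁻¹ := by
        rw [← mul_inv_rev, len_inv, len_inv, len_inv, bslen, lc]
        omega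
      have hTvinv : 𝒜.T c⁻¹ * 𝒜.T v⁻¹ = 𝒜.T (c⁻¹ * v⁻¹) :=
        𝒜.T_mul c⁻¹ v⁻¹ hleninv
      refine ⟨?_, ?_, ?_, ?_⟩
      · intro x hx
        rw [hrange]
        simp only [List.map_append, List.prod_append, List.map_cons, List.map_nil,
          List.prod_cons, List.prod_nil, he, pow_one, mul_one, ← hvdef, ← hcdef]
        show v (c x) = x
        have hcfix : c x = x := by
          rw [hcdef]
          exact jm_fix hAM x (by omega)
        rw [hcfix]
        exact ihfix x (by omega)
      · rw [hrange]
        simp only [List.map_append, List.prod_append, List.map_cons, List.map_nil,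
          List.prod_cons, List.prod_nil, he, pow_one, mul_one, ← hvdef, ← hcdef]
        rw [Finset.sum_range_succ, he, bslen, ihlen]
        omega
      · rw [hrange]
        simp only [List.map_append, List.prod_append, List.map_cons, List.map_nil,
          List.prod_cons, List.prod_nil, he, pow_one, mul_one, ← hvdef, ← hcdef]
        rw [ihsqrt, bsT]
      · rw [hrange]
        simp only [List.map_append, List.prod_append, List.map_cons, List.map_nil,
          List.prod_cons, List.prod_nil, he, pow_one, mul_one, ← hvdef, ← hcdef]
        rw [ihxi]
        have hcomm : 𝒜.T v⁻¹ * 𝒜.xiShift A (M + 1) = 𝒜.xiShift A (M + 1) * 𝒜.T v⁻¹ := by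
          apply commE 𝒜 A M hAM v⁻¹
          · intro x hx
            exact fix_inv (hvhigh x hx)
          · intro x hx
            rw [fix_inv (hvlow x hx)]
            exact hx
        calc 𝒜.T v * 𝒜.T v⁻¹ * 𝒜.xiShift A (M + 1)
            = 𝒜.T v * (𝒜.T v⁻¹ * 𝒜.xiShift A (M + 1)) := by rw [mul_assoc]
          _ = 𝒜.T v * (𝒜.xiShift A (M + 1) * 𝒜.T v⁻¹) := by rw [hcomm]
          _ = 𝒜.T v * (𝒜.T c * 𝒜.T c⁻¹ * 𝒜.T v⁻¹) := by rw [xiShift_eq 𝒜 A M hAM, ← hcdef]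
          _ = (𝒜.T v * 𝒜.T c) * (𝒜.T c⁻¹ * 𝒜.T v⁻¹) := by
              simp only [mul_assoc]
          _ = 𝒜.T (v * c) * 𝒜.T (c⁻¹ * v⁻¹) := by rw [hTv, hTvinv]
          _ = 𝒜.T (v * c) * 𝒜.T (v * c)⁻¹ := by rw [mul_inv_rev]

lemma xiComm (A : ℕ) (uu : ℕ → ℕ) (huu : ∀ p, uu p ≤ 1) (M : ℕ) (h : A + M ≤ n)
    (w : Equiv.Perm (Fin n)) (hw1 : ∀ x : Fin n, A ≤ (x : ℕ) → w x = x) :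
    𝒜.T w * ((List.range M).map fun j => 𝒜.xiShift A (j + 1) ^ uu (A + j)).prod
      = ((List.range M).map fun j => 𝒜.xiShift A (j + 1) ^ uu (A + j)).prod * 𝒜.T w := by
  induction M with
  | zero => simp
  | succ M ih =>
    rw [List.range_succ]
    simp only [List.map_append, List.prod_append, List.map_cons, List.map_nil,
      List.prod_cons, List.prod_nil, mul_one]
    rcases Nat.le_one_iff_eq_zero_or_eq_one.1 (huu (A + M)) with he | he
    · rw [he, pow_zero, mul_one]
      exact ih (by omega)
    · rw [he, pow_one]
      have hc : 𝒜.T w * 𝒜.xiShift A (M + 1) = 𝒜.xiShift A (M + 1) * 𝒜.T w := by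
        apply commE 𝒜 A M (by omega) w (fun x hx => hw1 x (by omega))
        intro x hx
        exact fix_high_apply_lt (K := A) w hw1 x hx
      rw [← mul_assoc, ih (by omega), mul_assoc, hc, ← mul_assoc]

end AuxHecke

section AuxOuter

lemma ofFn_prod_eq {M : Type} [Monoid M] (L : ℕ) (f : Fin L → M) (g : ℕ → M)
    (hfg : ∀ (i : ℕ) (hi : i < L), g i = f ⟨i, hi⟩) :
    (List.ofFn f).prod = ((List.range L).map g).prod := by
  congr 1
  apply List.ext_getElem
  · simp
  · intro i h1 h2
    simp only [List.getElem_ofFn, List.getElem_map, List.getElem_range]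
    rw [hfg i (by simpa using h1)]

lemma index_interval {n : ℕ} (c : Composition n) (k : ℕ) (hk : k < c.length) (x : Fin n)
    (hx1 : c.sizeUpTo k ≤ (x : ℕ)) (hx2 : (x : ℕ) < c.sizeUpTo (k + 1)) :
    c.index x = ⟨k, hk⟩ := by
  have hmem : x ∈ Set.range (c.embedding ⟨k, hk⟩) := by
    rw [Composition.mem_range_embedding_iff]
    exact ⟨hx1, hx2⟩
  exact ((Composition.mem_range_embedding_iff' c).1 hmem).symm

variable {n : ℕ} {R : Type} [CommRing R] {q : Rˣ} {H : Type} [Ring H] [Algebra R H]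
variable (𝒜 : HeckeAlgebra n R q H)

lemma outer (c : Composition n) (uu : ℕ → ℕ) (huu : ∀ p, uu p ≤ 1) :
    𝒜.xiUU c uu = 𝒜.T (sigmaUU c uu) * 𝒜.T (sigmaUU c uu)⁻¹ ∧
      ∀ i, c.index (sigmaUU c uu i) = c.index i := by
  classical
  set Mk : ℕ → ℕ := fun k => if hk : k < c.length then c.blocksFun ⟨k, hk⟩ else 0 with hMk
  set F : ℕ → Equiv.Perm (Fin n) := fun k =>
    ((List.range (Mk k)).map fun j => jmPerm n (c.sizeUpTo k) (j + 1)
      ^ uu (c.sizeUpTo k + j)).prod with hF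
  set G : ℕ → H := fun k =>
    ((List.range (Mk k)).map fun j => 𝒜.xiShift (c.sizeUpTo k) (j + 1)
      ^ uu (c.sizeUpTo k + j)).prod with hG
  have main : ∀ k, k ≤ c.length →
      (∀ x : Fin n, c.sizeUpTo k ≤ (x : ℕ) → (((List.range k).map F).prod) x = x) ∧
      (∀ x : Fin n, c.index ((((List.range k).map F).prod) x) = c.index x) ∧
      ((List.range k).map G).prod
        = 𝒜.T (((List.range k).map F).prod) * 𝒜.T (((List.range k).map F).prod)⁻¹ := by
    intro k
    induction k with
    | zero =>
      intro _
      refine ⟨fun x _ => rfl, fun x => rfl, ?_⟩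
      simp [𝒜.T_one]
    | succ k ihk =>
      intro hk1
      have hk : k < c.length := hk1
      obtain ⟨ihfix, ihidx, ihT⟩ := ihk (by omega)
      set w := ((List.range k).map F).prod with hwdef
      set A := c.sizeUpTo k with hA
      set M := c.blocksFun ⟨k, hk⟩ with hMdef
      have hMkk : Mk k = M := by rw [hMk]; simp [hk, hMdef]
      have hsucc : c.sizeUpTo (k + 1) = A + M := c.sizeUpTo_succ hk
      have hAM : A + M ≤ n := by
        rw [← hsucc]
        exact c.sizeUpTo_le (k + 1)
      obtain ⟨blfix, bllen, blsqrt, blxi⟩ := blockLocal 𝒜 A uu huu M hAM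
      set v := ((List.range M).map fun j => jmPerm n A (j + 1) ^ uu (A + j)).prod with hvdef
      have hFk : F k = v := by
        simp only [hF, hMkk, hvdef, hA]
      have hGk : G k = ((List.range M).map fun j =>
          𝒜.xiShift A (j + 1) ^ uu (A + j)).prod := by
        simp only [hG, hMkk, hA]
      have hvlow : ∀ x : Fin n, (x : ℕ) < A → v x = x := fun x hx => blfix x (Or.inl hx)
      have hvhigh : ∀ x : Fin n, A + M ≤ (x : ℕ) → v x = x := fun x hx => blfix x (Or.inr hx)
      have hrange : List.range (k + 1) = List.range k ++ [k] := List.range_succ (n := k)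
      have hprodF : ((List.range (k + 1)).map F).prod = w * v := by
        rw [hrange]
        simp only [List.map_append, List.prod_append, List.map_cons, List.map_nil,
          List.prod_cons, List.prod_nil, mul_one, hFk, hwdef]
      have hprodG : ((List.range (k + 1)).map G).prod
          = ((List.range k).map G).prod
            * ((List.range M).map fun j => 𝒜.xiShift A (j + 1) ^ uu (A + j)).prod := by
        rw [hrange]
        simp only [List.map_append, List.prod_append, List.map_cons, List.map_nil,
          List.prod_cons, List.prod_nil, mul_one, hGk]
      have hwfixA : ∀ x : Fin n, A ≤ (x : ℕ) → w x = x := fun x hx => ihfix x hx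
      refine ⟨?_, ?_, ?_⟩
      · intro x hx
        rw [hprodF]
        show w (v x) = x
        rw [hsucc] at hx
        rw [hvhigh x hx]
        exact hwfixA x (by omega)
      · intro x
        rw [hprodF]
        show c.index (w (v x)) = c.index x
        rw [ihidx (v x)]
        rcases lt_or_ge ((x : Fin n) : ℕ) A with hxA | hxA
        · rw [hvlow x hxA]
        rcases lt_or_ge ((x : Fin n) : ℕ) (A + M) with hxAM | hxAM
        · have hvx1 : A ≤ ((v x : Fin n) : ℕ) :=
            fix_low_apply_ge v (fun y hy => by rw [hvlow y hy]; exact hy) x hxA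
          have hvx2 : ((v x : Fin n) : ℕ) < A + M :=
            fix_high_apply_lt (K := A + M) v hvhigh x hxAM
          rw [index_interval c k hk (v x) hvx1 (by rw [hsucc]; exact hvx2),
            index_interval c k hk x hxA (by rw [hsucc]; exact hxAM)]
        · rw [hvhigh x hxAM]
      · rw [hprodF, hprodG, ihT]
        have hcommX : 𝒜.T w⁻¹ * ((List.range M).map fun j =>
              𝒜.xiShift A (j + 1) ^ uu (A + j)).prod
            = ((List.range M).map fun j => 𝒜.xiShift A (j + 1) ^ uu (A + j)).prod
              * 𝒜.T w⁻¹ := by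
          apply xiComm 𝒜 A uu huu M hAM w⁻¹
          intro x hx
          exact fix_inv (hwfixA x hx)
        have hlwv : len (w * v) = len w + len v :=
          len_mul_disjoint (A := A) w v hwfixA hvlow
        have hTwv : 𝒜.T w * 𝒜.T v = 𝒜.T (w * v) := 𝒜.T_mul w v hlwv
        have hTwvinv : 𝒜.T v⁻¹ * 𝒜.T w⁻¹ = 𝒜.T (v⁻¹ * w⁻¹) := by
          apply 𝒜.T_mul
          rw [← mul_inv_rev, len_inv, len_inv, len_inv, hlwv]
          omega
        calc 𝒜.T w * 𝒜.T w⁻¹ * ((List.range M).map fun j =>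
              𝒜.xiShift A (j + 1) ^ uu (A + j)).prod
            = 𝒜.T w * (𝒜.T w⁻¹ * ((List.range M).map fun j =>
              𝒜.xiShift A (j + 1) ^ uu (A + j)).prod) := by rw [mul_assoc]
          _ = 𝒜.T w * (((List.range M).map fun j =>
              𝒜.xiShift A (j + 1) ^ uu (A + j)).prod * 𝒜.T w⁻¹) := by rw [hcommX]
          _ = 𝒜.T w * ((𝒜.T v * 𝒜.T v⁻¹) * 𝒜.T w⁻¹) := by rw [blxi]
          _ = (𝒜.T w * 𝒜.T v) * (𝒜.T v⁻¹ * 𝒜.T w⁻¹) := by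
              simp only [mul_assoc]
          _ = 𝒜.T (w * v) * 𝒜.T (v⁻¹ * w⁻¹) := by rw [hTwv, hTwvinv]
          _ = 𝒜.T (w * v) * 𝒜.T (w * v)⁻¹ := by rw [mul_inv_rev]
  have hsigma : sigmaUU c uu = ((List.range c.length).map F).prod := by
    unfold sigmaUU
    apply ofFn_prod_eq
    intro i hi
    have hMki : Mk i = c.blocksFun ⟨i, hi⟩ := by rw [hMk]; simp [hi]
    simp only [hF, hMki]
  have hxiuu : 𝒜.xiUU c uu = ((List.range c.length).map G).prod := by
    unfold HeckeAlgebra.xiUU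
    apply ofFn_prod_eq
    intro i hi
    have hMki : Mk i = c.blocksFun ⟨i, hi⟩ := by rw [hMk]; simp [hi]
    simp only [hG, hMki]
  obtain ⟨_, hidx, hT⟩ := main c.length le_rfl
  rw [hsigma, hxiuu]
  exact ⟨hT, fun i => by rw [← hsigma]; rw [hsigma]; exact hidx i⟩

end AuxOuter

/-- For a 0-1 vector `u ∈ {0,1}^r`, the product
`√(ξ^u) = (1)^{u_1}(T_1)^{u_2}⋯(T_{r−1}⋯T_1)^{u_r}` is reduced (the length of
the underlying permutation `σ(u)` is the length of the word), `√(ξ^u) = T_{σ(u)}`,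
and `ξ^u = T_{σ(u)} · T_{σ(u)⁻¹}`.  More generally, for a composition `I` of `n`
and a compatible sequence `uu` of 0-1 vectors, `ξ^{uu} = T_{σ(uu)} · T_{σ(uu)⁻¹}`
with `σ(uu) ∈ S_I`. -/
theorem xiPow_eq_T_mul_T_inv {n : ℕ} {R : Type} [CommRing R] {q : Rˣ} {H : Type}
    [Ring H] [Algebra R H] (𝒜 : HeckeAlgebra n R q H)
    (r : ℕ) (hr : r ≤ n) (u : ℕ → ℕ) (hu : ∀ j, u j ≤ 1)
    (c : Composition n) (uu : ℕ → ℕ) (huu : ∀ p, uu p ≤ 1) :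
    len (sigmaOf n r u) = (∑ i ∈ Finset.range r, u (i + 1) * i) ∧
    𝒜.xiSqrt r u = 𝒜.T (sigmaOf n r u) ∧
    𝒜.xiPow r u = 𝒜.T (sigmaOf n r u) * 𝒜.T (sigmaOf n r u)⁻¹ ∧
    𝒜.xiUU c uu = 𝒜.T (sigmaUU c uu) * 𝒜.T (sigmaUU c uu)⁻¹ ∧
    sigmaUU c uu ∈ youngSubgroup c := by
  obtain ⟨hfix, hlen, hsqrt, hpow⟩ :=
    blockLocal 𝒜 0 (fun p => u (p + 1)) (fun p => hu (p + 1)) r (by omega)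
  simp only [Nat.zero_add] at hfix hlen hsqrt hpow
  obtain ⟨hxiuu, hidx⟩ := outer 𝒜 c uu huu
  refine ⟨?_, ?_, ?_, hxiuu, ?_⟩
  · exact hlen
  · exact hsqrt
  · exact hpow
  · exact hidx

end
end HeckePaper
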